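/- Fix r ≥ 2, m ≥ 1, and let A_k = I_{r^{m-k}} ⊗ 𝟙_{1/r} ⊗ I_{r^{k-1}} for k ∈ [m]. For i ∈ [r^m] and k ∈ [m], define D_k(i) = {j ∈ [r^m] : (A_k A_{k-1} ⋯ A_1)^{ij} > 0}. Then D_k(i) = { r^k·⌊(i-1)/r^k⌋ + q : q ∈ [r^k] }, so |D_k(i)| = r^k. -/

import Mathlib

open Matrix BigOperators

/-- Kronecker product of square matrices, with blocks of `A ⊗ B` given by `A^{pq} • B`,
reindexed to `Fin (M * N)`. -/
noncomputable def kron {M N : ℕ} (A : Matrix (Fin M) (Fin M) ℝ) (B : Matrix (Fin N) (Fin N) ℝ) :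
    Matrix (Fin (M * N)) (Fin (M * N)) ℝ :=
  Matrix.reindex finProdFinEquiv finProdFinEquiv (Matrix.kroneckerMap (· * ·) A B)

/-- The n×n matrix with every entry equal to 1/n. -/
noncomputable def onesMat (n : ℕ) : Matrix (Fin n) (Fin n) ℝ := fun _ _ => 1 / (n : ℝ)


lemma sizeEq (r m : ℕ) (k : Fin m) : r ^ (m - 1 - k.1) * (r * r ^ k.1) = r ^ m := by
  have hk : k.1 < m := k.isLt
  rw [← pow_succ', ← pow_add]
  congr 1
  omega

/-- The radix-r butterfly matrix `A_k = I_{r^(m-k)} ⊗ 𝟙_{1/r} ⊗ I_{r^(k-1)}`, where the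
1-based index `k ∈ [m]` is represented by the 0-based `k : Fin m` (so `k.1 = k - 1`). -/
noncomputable def Ak (r m : ℕ) (k : Fin m) : Matrix (Fin (r ^ m)) (Fin (r ^ m)) ℝ :=
  Matrix.reindex (finCongr (sizeEq r m k)) (finCongr (sizeEq r m k))
    (kron (1 : Matrix (Fin (r ^ (m - 1 - k.1))) (Fin (r ^ (m - 1 - k.1))) ℝ)
      (kron (onesMat r) (1 : Matrix (Fin (r ^ k.1)) (Fin (r ^ k.1)) ℝ)))

lemma kron_apply {M N : ℕ} (A : Matrix (Fin M) (Fin M) ℝ) (B : Matrix (Fin N) (Fin N) ℝ)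
    (i j : Fin (M * N)) : kron A B i j = A i.divNat j.divNat * B i.modNat j.modNat := rfl

lemma Ak_apply (r m : ℕ) (t : Fin m) (i j : Fin (r ^ m)) :
    Ak r m t i j =
      if (i : ℕ) / (r * r ^ t.1) = (j : ℕ) / (r * r ^ t.1) ∧
         (i : ℕ) % r ^ t.1 = (j : ℕ) % r ^ t.1 then (1 / r : ℝ) else 0 := by
  have hdvd : (r ^ t.1 : ℕ) ∣ r * r ^ t.1 := dvd_mul_left _ _
  simp only [Ak, Matrix.reindex_apply, Matrix.submatrix_apply, kron_apply,
    Matrix.one_apply, onesMat, Fin.ext_iff, Fin.coe_divNat, Fin.coe_modNat]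
  have h1 : ((finCongr (sizeEq r m t)).symm i : ℕ) = (i : ℕ) := rfl
  have h2 : ((finCongr (sizeEq r m t)).symm j : ℕ) = (j : ℕ) := rfl
  rw [h1, h2, Nat.mod_mod_of_dvd _ hdvd, Nat.mod_mod_of_dvd _ hdvd]
  by_cases hc1 : (i : ℕ) / (r * r ^ t.1) = (j : ℕ) / (r * r ^ t.1) <;>
    by_cases hc2 : (i : ℕ) % r ^ t.1 = (j : ℕ) % r ^ t.1 <;>
    simp [hc1, hc2]

lemma block_lt (r m k : ℕ) (hr : 1 ≤ r) (hk : k ≤ m) (j e : ℕ) (hj : j < r ^ m)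
    (he : e < r ^ k) : r ^ k * (j / r ^ k) + e < r ^ m := by
  have h1 : j / r ^ k < r ^ (m - k) := by
    apply Nat.div_lt_of_lt_mul
    rwa [← pow_add, show k + (m - k) = m by omega]
  calc r ^ k * (j / r ^ k) + e < r ^ k * (j / r ^ k) + r ^ k := by omega
    _ = r ^ k * (j / r ^ k + 1) := by ring
    _ ≤ r ^ k * r ^ (m - k) := Nat.mul_le_mul_left _ (by omega)
    _ = r ^ m := by rw [← pow_add]; congr 1; omega

lemma butterfly_prod_apply (r m : ℕ) (hr : 2 ≤ r) : ∀ (k : ℕ), 1 ≤ k → ∀ (hk2 : k ≤ m)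
    (i j : Fin (r ^ m)),
    ((List.ofFn (fun t : Fin k => Ak r m (Fin.castLE hk2 t))).reverse.prod) i j
      = if (i : ℕ) / r ^ k = (j : ℕ) / r ^ k then (1 / r : ℝ) ^ k else 0 := by
  have hrpos : 0 < r := by omega
  intro k
  induction k with
  | zero => omega
  | succ k ih =>
    intro hk1 hk2 i j
    rcases Nat.eq_zero_or_pos k with hk0 | hkpos
    · subst hk0
      have hl : (List.ofFn (fun t : Fin 1 => Ak r m (Fin.castLE hk2 t)))
          = [Ak r m (Fin.castLE hk2 0)] := by
        simp [List.ofFn_succ]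
      rw [hl]
      simp only [List.reverse_singleton, List.prod_singleton, Ak_apply]
      simp [Nat.mod_one]
    · have hk2' : k ≤ m := by omega
      have hfun : (fun t : Fin (k+1) => Ak r m (Fin.castLE hk2 t))
          = fun t => Ak r m (Fin.castLE hk2 t) := rfl
      rw [List.ofFn_succ', List.concat_eq_append, List.reverse_append,
        List.reverse_singleton, List.singleton_append, List.prod_cons]
      have hlist : (List.ofFn fun t : Fin k => Ak r m (Fin.castLE hk2 t.castSucc))
          = List.ofFn fun t : Fin k => Ak r m (Fin.castLE hk2' t) := by
        congr 1
      rw [hlist, Matrix.mul_apply]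
      have hrk : 0 < r ^ k := pow_pos hrpos k
      have hAklast : (Fin.castLE hk2 (Fin.last k)).1 = k := rfl
      simp only [ih hkpos hk2', Ak_apply, hAklast]
      have hdd : ∀ a : ℕ, a / (r * r ^ k) = (a / r ^ k) / r := by
        intro a; rw [Nat.div_div_eq_div_mul, mul_comm]
      rw [show r ^ (k+1) = r * r ^ k from pow_succ' r k,
        show (1/(r:ℝ)) ^ (k+1) = (1/r) * (1/r) ^ k from pow_succ' _ k]
      by_cases hij : (i : ℕ) / (r * r ^ k) = (j : ℕ) / (r * r ^ k)
      · rw [if_pos hij]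
        have he : (i : ℕ) % r ^ k < r ^ k := Nat.mod_lt _ hrk
        have hl0lt := block_lt r m k (by omega) hk2' j.1 ((i : ℕ) % r ^ k) j.isLt he
        rw [Finset.sum_eq_single (⟨_, hl0lt⟩ : Fin (r ^ m))]
        · have hmod : (r ^ k * ((j:ℕ) / r ^ k) + (i:ℕ) % r ^ k) % r ^ k = (i:ℕ) % r ^ k := by
            rw [Nat.mul_add_mod, Nat.mod_eq_of_lt he]
          have hdiv : (r ^ k * ((j:ℕ) / r ^ k) + (i:ℕ) % r ^ k) / r ^ k = (j:ℕ) / r ^ k := by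
            rw [Nat.mul_add_div hrk, Nat.div_eq_of_lt he, add_zero]
          have hdiv2 : (i:ℕ) / (r * r ^ k)
              = (r ^ k * ((j:ℕ) / r ^ k) + (i:ℕ) % r ^ k) / (r * r ^ k) := by
            rw [hdd, hdd, hdiv, ← hdd, ← hdd]
            exact hij
          simp only [Fin.val_mk]
          rw [if_pos ⟨hdiv2, hmod.symm⟩, if_pos hdiv]
        · intro b _ hb
          by_cases hA : (i:ℕ) / (r * r ^ k) = (b:ℕ) / (r * r ^ k) ∧
              (i:ℕ) % r ^ k = (b:ℕ) % r ^ k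
          · by_cases hB : (b:ℕ) / r ^ k = (j:ℕ) / r ^ k
            · exfalso
              apply hb
              apply Fin.ext
              show (b : ℕ) = r ^ k * ((j:ℕ) / r ^ k) + (i:ℕ) % r ^ k
              conv_lhs => rw [← Nat.div_add_mod (b:ℕ) (r ^ k)]
              rw [hB, ← hA.2]
            · simp [hB]
          · simp [hA]
        · simp
      · rw [if_neg hij]
        apply Finset.sum_eq_zero
        intro l _
        by_cases hA : (i:ℕ) / (r * r ^ k) = (l:ℕ) / (r * r ^ k) ∧
            (i:ℕ) % r ^ k = (l:ℕ) % r ^ k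
        · by_cases hB : (l:ℕ) / r ^ k = (j:ℕ) / r ^ k
          · exfalso
            apply hij
            rw [hA.1, hdd, hdd, hB]
          · simp [hB]
        · simp [hA]

/-- The support of row i of the product A_k ⋯ A_1 (0-based indices):
D_k(i) = { r^k ⌊i / r^k⌋ + (q-1) : q ∈ [r^k] }, of cardinality r^k. -/
theorem butterfly_reach_set (r m : ℕ) (hr : 2 ≤ r) (k : ℕ) (hk1 : 1 ≤ k) (hk2 : k ≤ m)
    (i : Fin (r ^ m)) :
    {j : Fin (r ^ m) |
        0 < ((List.ofFn (fun t : Fin k => Ak r m (Fin.castLE hk2 t))).reverse.prod) i j}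
      = {j : Fin (r ^ m) | ∃ q ∈ Finset.Icc 1 (r ^ k),
          (j : ℕ) = r ^ k * ((i : ℕ) / r ^ k) + (q - 1)}
    ∧ Set.ncard {j : Fin (r ^ m) |
        0 < ((List.ofFn (fun t : Fin k => Ak r m (Fin.castLE hk2 t))).reverse.prod) i j}
      = r ^ k := by
  have hrpos : 0 < r := by omega
  have hrk : 0 < r ^ k := pow_pos hrpos k
  have hpow : (0 : ℝ) < (1 / r) ^ k := by positivity
  have hS : {j : Fin (r ^ m) |
        0 < ((List.ofFn (fun t : Fin k => Ak r m (Fin.castLE hk2 t))).reverse.prod) i j}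
      = {j : Fin (r ^ m) | (i : ℕ) / r ^ k = (j : ℕ) / r ^ k} := by
    ext j
    simp only [Set.mem_setOf_eq, butterfly_prod_apply r m hr k hk1 hk2 i j]
    constructor
    · intro h
      by_contra hc
      simp [hc] at h
    · intro h
      rw [if_pos h]
      exact hpow
  constructor
  · rw [hS]
    ext j
    simp only [Set.mem_setOf_eq, Finset.mem_Icc]
    constructor
    · intro h
      have hm : (j : ℕ) % r ^ k < r ^ k := Nat.mod_lt _ hrk
      have hd : r ^ k * ((j : ℕ) / r ^ k) + (j : ℕ) % r ^ k = (j : ℕ) :=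
        Nat.div_add_mod _ _
      refine ⟨(j : ℕ) % r ^ k + 1, ⟨Nat.succ_le_succ (Nat.zero_le _), hm⟩, ?_⟩
      rw [h, Nat.add_sub_cancel]
      exact (Nat.div_add_mod _ _).symm
    · rintro ⟨q, ⟨hq1, hq2⟩, hjq⟩
      have hql : q - 1 < r ^ k := by omega
      rw [hjq, Nat.mul_add_div hrk, Nat.div_eq_of_lt hql, add_zero]
  · rw [hS]
    have hb : ∀ q : Fin (r ^ k), r ^ k * ((i : ℕ) / r ^ k) + q.1 < r ^ m :=
      fun q => block_lt r m k (by omega) hk2 i.1 q.1 i.isLt q.2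
    have hSF : {j : Fin (r ^ m) | (i : ℕ) / r ^ k = (j : ℕ) / r ^ k}
        = ↑((Finset.univ : Finset (Fin (r ^ k))).image
            (fun q => (⟨r ^ k * ((i : ℕ) / r ^ k) + q.1, hb q⟩ : Fin (r ^ m)))) := by
      ext j
      simp only [Finset.coe_image, Finset.coe_univ, Set.image_univ, Set.mem_range,
        Set.mem_setOf_eq]
      constructor
      · intro h
        refine ⟨⟨(j : ℕ) % r ^ k, Nat.mod_lt _ hrk⟩, ?_⟩
        apply Fin.ext
        simp only [Fin.val_mk]
        rw [h]
        exact Nat.div_add_mod (j : ℕ) (r ^ k)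
      · rintro ⟨q, rfl⟩
        simp only [Fin.val_mk]
        rw [Nat.mul_add_div hrk, Nat.div_eq_of_lt q.2, add_zero]
    rw [hSF, Set.ncard_coe_finset,
      Finset.card_image_of_injective _ (fun a b hab => by
        have := congrArg Fin.val hab
        simp only [Fin.val_mk] at this
        exact Fin.ext (by omega)),
      Finset.card_univ, Fintype.card_fin]
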